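/- Let W be a standard one-dimensional Brownian motion and Δt > 0. Define ΔU := (Δt/2)·W_{Δt} − ∫₀^{Δt} W_t dt, I_{(1,0,0)} := ∫₀^{Δt} ∫₀^t W_s ds dt, I_{(0,1,0)} := ∫₀^{Δt} ( t·W_t − ∫₀^t W_s ds ) dt, and ΔV := (1/9)·( I_{(0,1,0)} − I_{(1,0,0)} − Δt·ΔU ). Then E[ ΔV² ] = Δt⁵/2430. -/

import Mathlib

open MeasureTheory ProbabilityTheory Real Filter Function Set
open scoped NNReal ENNReal

lemma odd_integral_zero (f : ℝ → ℝ) (hf : ∀ x, f (-x) = - f x) : ∫ x : ℝ, f x = 0 := by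
  have h : ∫ x : ℝ, f (-x) = ∫ x : ℝ, f x :=
    (Measure.measurePreserving_neg volume).integral_comp (Homeomorph.neg ℝ).measurableEmbedding f
  simp only [hf, MeasureTheory.integral_neg] at h
  linarith

lemma integrable_sq_mul_exp {b : ℝ} (hb : 0 < b) :
    Integrable (fun x : ℝ => x ^ 2 * Real.exp (-b * x ^ 2)) := by
  have h := integrable_rpow_mul_exp_neg_mul_sq hb (s := 2) (by norm_num)
  refine h.congr ?_
  filter_upwards with x
  rw [show ((2:ℝ)) = ((2:ℕ):ℝ) by norm_num, Real.rpow_natCast]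

lemma integral_sq_mul_exp {b : ℝ} (hb : 0 < b) :
    ∫ x : ℝ, x ^ 2 * Real.exp (-b * x ^ 2) = (2 * b)⁻¹ * Real.sqrt (π / b) := by
  have hderiv : ∀ x : ℝ, HasDerivAt (fun x : ℝ => x * Real.exp (-b * x ^ 2))
      (Real.exp (-b * x ^ 2) - 2 * b * (x ^ 2 * Real.exp (-b * x ^ 2))) x := by
    intro x
    have h1 : HasDerivAt (fun x : ℝ => -b * x ^ 2) (-b * (2 * x)) x := by
      simpa using ((hasDerivAt_pow 2 x).const_mul (-b))
    have h3 := (hasDerivAt_id x).fun_mul h1.exp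
    refine h3.congr_deriv ?_
    simp [id_eq]; ring
  have hint : Integrable (fun x : ℝ => Real.exp (-b * x ^ 2) - 2 * b * (x ^ 2 * Real.exp (-b * x ^ 2))) :=
    (integrable_exp_neg_mul_sq hb).sub ((integrable_sq_mul_exp hb).const_mul _)
  have h0 := integral_eq_zero_of_hasDerivAt_of_integrable hderiv hint (integrable_mul_exp_neg_mul_sq hb)
  rw [integral_sub (integrable_exp_neg_mul_sq hb) ((integrable_sq_mul_exp hb).const_mul _),
    MeasureTheory.integral_const_mul, integral_gaussian] at h0
  have hb' : (2 * b) ≠ 0 := by positivity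
  field_simp at h0 ⊢
  linarith

lemma integral_gaussianReal (v : ℝ≥0) (g : ℝ → ℝ) (hg : Measurable g) (hv : v ≠ 0) :
    ∫ x, g x ∂(gaussianReal 0 v) = ∫ x, gaussianPDFReal 0 v x * g x := by
  rw [gaussianReal_of_var_ne_zero 0 hv]
  have : (gaussianPDF 0 v) = fun x => ((Real.toNNReal (gaussianPDFReal 0 v x) : ℝ≥0) : ℝ≥0∞) := by
    funext x; rw [gaussianPDF]; rfl
  rw [this, integral_withDensity_eq_integral_smul ((measurable_gaussianPDFReal 0 v).real_toNNReal) g]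
  congr 1 with x
  simp [NNReal.smul_def, Real.coe_toNNReal _ (gaussianPDFReal_nonneg 0 v x)]

lemma gaussianPDFReal_eq (v : ℝ≥0) (hv : v ≠ 0) (x : ℝ) :
    gaussianPDFReal 0 v x = (Real.sqrt (2 * π * v))⁻¹ * rexp (-(2 * (v:ℝ))⁻¹ * x ^ 2) := by
  rw [gaussianPDFReal]
  have hv' : (0:ℝ) < v := lt_of_le_of_ne v.2 (by exact_mod_cast (Ne.symm hv))
  congr 1
  rw [sub_zero]
  congr 1
  field_simp

lemma integrable_gaussian_aux (v : ℝ≥0) (g : ℝ → ℝ) (hg : Measurable g) (hv : v ≠ 0)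
    (hint : Integrable (fun x => gaussianPDFReal 0 v x * g x)) :
    Integrable g (gaussianReal 0 v) := by
  rw [gaussianReal_of_var_ne_zero 0 hv]
  have : (gaussianPDF 0 v) = fun x => ((Real.toNNReal (gaussianPDFReal 0 v x) : ℝ≥0) : ℝ≥0∞) := by
    funext x; rw [gaussianPDF]; rfl
  rw [this, integrable_withDensity_iff_integrable_smul ((measurable_gaussianPDFReal 0 v).real_toNNReal)]
  refine hint.congr ?_
  filter_upwards with x
  simp [NNReal.smul_def, Real.coe_toNNReal _ (gaussianPDFReal_nonneg 0 v x)]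

lemma two_v_inv_pos {v : ℝ≥0} (hv : v ≠ 0) : (0:ℝ) < (2 * (v:ℝ))⁻¹ := by
  have hv' : (0:ℝ) < v := lt_of_le_of_ne v.2 (by exact_mod_cast (Ne.symm hv))
  positivity

lemma integrable_id_gaussianReal (v : ℝ≥0) : Integrable (fun x => x) (gaussianReal 0 v) := by
  rcases eq_or_ne v 0 with rfl | hv
  · rw [gaussianReal_zero_var]
    exact ⟨aestronglyMeasurable_id, by simp [HasFiniteIntegral, lintegral_dirac]⟩
  refine integrable_gaussian_aux v _ measurable_id hv ?_
  have := (integrable_mul_exp_neg_mul_sq (two_v_inv_pos hv)).const_mul (Real.sqrt (2 * π * v))⁻¹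
  refine this.congr ?_
  filter_upwards with x
  rw [gaussianPDFReal_eq v hv]; ring

lemma integrable_sq_gaussianReal (v : ℝ≥0) : Integrable (fun x => x ^ 2) (gaussianReal 0 v) := by
  rcases eq_or_ne v 0 with rfl | hv
  · rw [gaussianReal_zero_var]
    refine ⟨(measurable_id.pow_const 2).aestronglyMeasurable, ?_⟩
    rw [HasFiniteIntegral, lintegral_dirac' _ (by fun_prop)]
    simp
  refine integrable_gaussian_aux v _ (by fun_prop) hv ?_
  have := (integrable_sq_mul_exp (two_v_inv_pos hv)).const_mul (Real.sqrt (2 * π * v))⁻¹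
  refine this.congr ?_
  filter_upwards with x
  rw [gaussianPDFReal_eq v hv]; ring

lemma integral_id_gaussianReal (v : ℝ≥0) : ∫ x, x ∂(gaussianReal 0 v) = 0 := by
  rcases eq_or_ne v 0 with rfl | hv
  · rw [gaussianReal_zero_var]; simp
  rw [integral_gaussianReal v _ measurable_id' hv]
  refine odd_integral_zero _ fun x => ?_
  rw [gaussianPDFReal_eq v hv, gaussianPDFReal_eq v hv]
  ring_nf

lemma integral_sq_gaussianReal (v : ℝ≥0) : ∫ x, x ^ 2 ∂(gaussianReal 0 v) = v := by
  rcases eq_or_ne v 0 with rfl | hv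
  · rw [gaussianReal_zero_var]; simp
  rw [integral_gaussianReal v _ (by fun_prop) hv]
  have hb := two_v_inv_pos hv
  have hv' : (0:ℝ) < v := lt_of_le_of_ne v.2 (by exact_mod_cast (Ne.symm hv))
  calc ∫ x, gaussianPDFReal 0 v x * x ^ 2
      = (Real.sqrt (2 * π * v))⁻¹ * ∫ x, x ^ 2 * rexp (-(2 * (v:ℝ))⁻¹ * x ^ 2) := by
        rw [← MeasureTheory.integral_const_mul]
        congr 1 with x
        rw [gaussianPDFReal_eq v hv]; ring
    _ = (Real.sqrt (2 * π * v))⁻¹ * ((v:ℝ) * Real.sqrt (2 * π * v)) := by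
        rw [integral_sq_mul_exp hb]
        rw [show (2 * (2 * (v:ℝ))⁻¹) = (v:ℝ)⁻¹ by field_simp, inv_inv,
          show π / (2 * (v:ℝ))⁻¹ = 2 * π * (v:ℝ) by field_simp]
    _ = v := by
        have : Real.sqrt (2 * π * v) ≠ 0 := by
          refine ne_of_gt (Real.sqrt_pos.2 ?_)
          have := Real.pi_pos; positivity
        field_simp

lemma integrable_mul_of_memL2 {Ω : Type*} [MeasurableSpace Ω] {P : Measure Ω} {f g : Ω → ℝ}
    (hf : MemLp f 2 P) (hg : MemLp g 2 P) : Integrable (fun ω => f ω * g ω) P := by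
  have hfg : AEStronglyMeasurable (fun ω => f ω * g ω) P := hf.1.mul hg.1
  refine Integrable.mono' (((hf.integrable_sq.add hg.integrable_sq)).const_mul (1/2 : ℝ)) hfg ?_
  filter_upwards with ω
  simp only [Pi.add_apply]
  rw [Real.norm_eq_abs, abs_mul]
  nlinarith [sq_nonneg (|f ω| - |g ω|), sq_abs (f ω), sq_abs (g ω), abs_nonneg (f ω), abs_nonneg (g ω)]



lemma iterated_eq (f : ℝ → ℝ) (hf : Continuous f) (Δ : ℝ) :
    (∫ t in (0:ℝ)..Δ, ∫ s in (0:ℝ)..t, f s) = ∫ t in (0:ℝ)..Δ, (Δ - t) * f t := by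
  set F : ℝ → ℝ := fun t => ∫ s in (0:ℝ)..t, f s with hF
  have hFderiv : ∀ t : ℝ, HasDerivAt F (f t) t := fun t =>
    (hf.integral_hasStrictDerivAt 0 t).hasDerivAt
  have hFcont : Continuous F := continuous_iff_continuousAt.2 fun t => (hFderiv t).continuousAt
  have hG : ∀ t : ℝ, HasDerivAt (fun t => (t - Δ) * F t) (F t + (t - Δ) * f t) t := by
    intro t
    have h := ((hasDerivAt_id t).sub_const Δ).fun_mul (hFderiv t)
    refine h.congr_deriv ?_
    simp [id_eq]
  have hc1 : Continuous (fun t => (t - Δ) * f t) := by fun_prop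
  have hint : IntervalIntegrable (fun t => F t + (t - Δ) * f t) volume 0 Δ :=
    (hFcont.add hc1).intervalIntegrable _ _
  have h0 := intervalIntegral.integral_eq_sub_of_hasDerivAt (fun t _ => hG t) hint
  have hF0 : F 0 = 0 := by simp [hF]
  rw [intervalIntegral.integral_add (hFcont.intervalIntegrable _ _)
    (hc1.intervalIntegrable _ _)] at h0
  simp only [hF0, sub_self, zero_mul, mul_zero, sub_zero] at h0
  have h1 : (∫ t in (0:ℝ)..Δ, (t - Δ) * f t) = - ∫ t in (0:ℝ)..Δ, (Δ - t) * f t := by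
    rw [← intervalIntegral.integral_neg]
    refine intervalIntegral.integral_congr fun x _ => by ring
  rw [h1] at h0
  have h2 : (∫ t in (0:ℝ)..Δ, F t) = ∫ t in (0:ℝ)..Δ, (Δ - t) * f t := by linarith
  simpa [hF] using h2

lemma path_reduction (f : ℝ → ℝ) (hf : Continuous f) (Δ : ℝ) :
    (∫ t in (0:ℝ)..Δ, (t * f t - ∫ s in (0:ℝ)..t, f s))
      - (∫ t in (0:ℝ)..Δ, ∫ s in (0:ℝ)..t, f s)
      - Δ * (Δ / 2 * f Δ - ∫ t in (0:ℝ)..Δ, f t)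
    = (∫ t in (0:ℝ)..Δ, (3 * t - Δ) * f t) - Δ ^ 2 / 2 * f Δ := by
  set F : ℝ → ℝ := fun t => ∫ s in (0:ℝ)..t, f s with hF
  have hFderiv : ∀ t : ℝ, HasDerivAt F (f t) t := fun t =>
    (hf.integral_hasStrictDerivAt 0 t).hasDerivAt
  have hFcont : Continuous F := continuous_iff_continuousAt.2 fun t => (hFderiv t).continuousAt
  have hc0 : Continuous (fun t : ℝ => t * f t) := by fun_prop
  have hc2 : Continuous (fun t : ℝ => (Δ - t) * f t) := by fun_prop
  have h1 : (∫ t in (0:ℝ)..Δ, (t * f t - F t))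
      = (∫ t in (0:ℝ)..Δ, t * f t) - ∫ t in (0:ℝ)..Δ, F t :=
    intervalIntegral.integral_sub (hc0.intervalIntegrable _ _) (hFcont.intervalIntegrable _ _)
  have h2 := iterated_eq f hf Δ
  have h3 : (∫ t in (0:ℝ)..Δ, (3 * t - Δ) * f t)
      = (∫ t in (0:ℝ)..Δ, t * f t) - 2 * (∫ t in (0:ℝ)..Δ, (Δ - t) * f t)
        + Δ * ∫ t in (0:ℝ)..Δ, f t := by
    have e1 : (∫ t in (0:ℝ)..Δ, (3 * t - Δ) * f t)
        = ∫ t in (0:ℝ)..Δ, (t * f t - 2 * ((Δ - t) * f t) + Δ * f t) :=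
      intervalIntegral.integral_congr fun x _ => by ring
    rw [e1, intervalIntegral.integral_add
        ((hc0.fun_sub (continuous_const.fun_mul hc2)).intervalIntegrable _ _)
        ((continuous_const.fun_mul hf).intervalIntegrable _ _),
      intervalIntegral.integral_sub (hc0.intervalIntegrable _ _)
        ((continuous_const.fun_mul hc2).intervalIntegrable _ _),
      intervalIntegral.integral_const_mul, intervalIntegral.integral_const_mul]
  rw [h1, ← hF, h2, h3]
  ring

lemma exists_modification {Ω : Type*} [MeasurableSpace Ω] {P : Measure Ω} {W : ℝ → Ω → ℝ}
    (hmeas : ∀ t, Measurable (W t)) (hcont : ∀ᵐ ω ∂P, Continuous fun t => W t ω) :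
    ∃ X : ℝ → Ω → ℝ, Measurable (Function.uncurry X) ∧ (∀ ω, Continuous fun t => X t ω) ∧
      (∀ᵐ ω ∂P, ∀ t, X t ω = W t ω) := by
  have h0 : P {ω | ¬ Continuous fun t => W t ω} = 0 := by
    rw [← MeasureTheory.ae_iff]; exact hcont
  obtain ⟨N, hSN, hNm, hN0⟩ := exists_measurable_superset_of_null h0
  classical
  refine ⟨fun t ω => if ω ∈ N then 0 else W t ω, ?_, ?_, ?_⟩
  · refine measurable_uncurry_of_continuous_of_measurable (fun ω => ?_) (fun t => ?_)
    · by_cases hω : ω ∈ N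
      · simp only [hω, if_true]; exact continuous_const
      · simp only [hω, if_false]
        by_contra hc
        exact hω (hSN hc)
    · exact Measurable.ite hNm measurable_const (hmeas t)
  · intro ω
    by_cases hω : ω ∈ N
    · simp only [hω, if_true]; exact continuous_const
    · simp only [hω, if_false]
      by_contra hc
      exact hω (hSN hc)
  · have : ∀ᵐ ω ∂P, ω ∉ N := by
      rw [MeasureTheory.ae_iff]
      simpa using hN0
    filter_upwards [this] with ω hω t
    simp [hω]


/-- A standard one-dimensional Brownian motion on a probability space `(Ω, P)`:
almost surely continuous sample paths, `W 0 = 0`, independent increments, and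
Gaussian increments `W t - W s ~ N(0, t - s)` for `0 ≤ s ≤ t`. -/
structure IsBrownianMotion {Ω : Type*} [MeasurableSpace Ω] (P : Measure Ω)
    (W : ℝ → Ω → ℝ) : Prop where
  measurable : ∀ t, Measurable (W t)
  cont : ∀ᵐ ω ∂P, Continuous fun t => W t ω
  init : ∀ᵐ ω ∂P, W 0 ω = 0
  gaussian_incr : ∀ s t : ℝ, 0 ≤ s → s ≤ t →
    P.map (fun ω => W t ω - W s ω) = gaussianReal 0 (Real.toNNReal (t - s))
  indep_incr : ∀ (n : ℕ) (ts : Fin (n + 1) → ℝ), Monotone ts → (∀ i, 0 ≤ ts i) →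
    iIndepFun
      (fun i : Fin n => fun ω => W (ts i.succ) ω - W (ts i.castSucc) ω) P

section BM
variable {Ω : Type*} [MeasurableSpace Ω] {P : Measure Ω} [IsProbabilityMeasure P]
  {W : ℝ → Ω → ℝ} (hW : IsBrownianMotion P W)

include hW

lemma IsBM.map_W {t : ℝ} (ht : 0 ≤ t) : P.map (W t) = gaussianReal 0 t.toNNReal := by
  have h := hW.gaussian_incr 0 t le_rfl ht
  rw [sub_zero] at h
  rw [← h]
  refine Measure.map_congr ?_
  filter_upwards [hW.init] with ω h0
  simp [h0]

lemma IsBM.integral_map {t : ℝ} (ht : 0 ≤ t) (g : ℝ → ℝ) (hg : Measurable g) :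
    ∫ ω, g (W t ω) ∂P = ∫ x, g x ∂(gaussianReal 0 t.toNNReal) := by
  rw [← IsBM.map_W hW ht, MeasureTheory.integral_map (hW.measurable t).aemeasurable hg.aestronglyMeasurable]

lemma IsBM.integrable_comp {t : ℝ} (ht : 0 ≤ t) (g : ℝ → ℝ) (hg : Measurable g)
    (hint : Integrable g (gaussianReal 0 t.toNNReal)) :
    Integrable (fun ω => g (W t ω)) P := by
  rw [← IsBM.map_W hW ht] at hint
  exact (integrable_map_measure hg.aestronglyMeasurable (hW.measurable t).aemeasurable).mp hint

lemma IsBM.integrable_W {t : ℝ} (ht : 0 ≤ t) : Integrable (W t) P :=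
  IsBM.integrable_comp hW ht id measurable_id (integrable_id_gaussianReal _)

lemma IsBM.integrable_W_sq {t : ℝ} (ht : 0 ≤ t) : Integrable (fun ω => W t ω ^ 2) P :=
  IsBM.integrable_comp hW ht (fun x => x ^ 2) (by fun_prop) (integrable_sq_gaussianReal _)

lemma IsBM.memL2_W {t : ℝ} (ht : 0 ≤ t) : MemLp (W t) 2 P :=
  (memLp_two_iff_integrable_sq (hW.measurable t).aestronglyMeasurable).2
    (by simpa [sq] using IsBM.integrable_W_sq hW ht)

lemma IsBM.integral_W {t : ℝ} (ht : 0 ≤ t) : ∫ ω, W t ω ∂P = 0 := by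
  have h := IsBM.integral_map hW ht id measurable_id
  simp only [id_eq] at h
  rw [h]
  exact integral_id_gaussianReal _

lemma IsBM.integral_W_sq {t : ℝ} (ht : 0 ≤ t) : ∫ ω, W t ω ^ 2 ∂P = t := by
  rw [IsBM.integral_map hW ht (fun x => x ^ 2) (by fun_prop), integral_sq_gaussianReal]
  exact Real.coe_toNNReal t ht

lemma IsBM.integrable_mul {s t : ℝ} (hs : 0 ≤ s) (ht : 0 ≤ t) :
    Integrable (fun ω => W s ω * W t ω) P :=
  integrable_mul_of_memL2 (IsBM.memL2_W hW hs) (IsBM.memL2_W hW ht)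

lemma IsBM.indep_incr2 {s t : ℝ} (hs : 0 ≤ s) (hst : s ≤ t) :
    IndepFun (W s) (fun ω => W t ω - W s ω) P := by
  have hmono : Monotone ![0, s, t] := by
    intro i j hij
    fin_cases i <;> fin_cases j <;> simp_all <;> first | linarith | exact absurd hij (by decide)
  have hpos : ∀ i, 0 ≤ (![0, s, t] : Fin 3 → ℝ) i := by
    intro i; fin_cases i <;> simp <;> linarith
  have h := (hW.indep_incr 2 ![0, s, t] hmono hpos).indepFun
    (i := 0) (j := 1) (by decide)
  simp only [Fin.succ] at h
  have h01 : IndepFun (fun ω => W s ω - W 0 ω) (fun ω => W t ω - W s ω) P := by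
    convert h using 2 <;> norm_num
  refine h01.congr ?_ (by rfl)
  filter_upwards [hW.init] with ω h0
  rw [h0, sub_zero]

lemma IsBM.cov {s t : ℝ} (hs : 0 ≤ s) (hst : s ≤ t) :
    ∫ ω, W s ω * W t ω ∂P = s := by
  have ht : 0 ≤ t := hs.trans hst
  have hkey : ∀ ω, W s ω * W t ω = W s ω ^ 2 + W s ω * (W t ω - W s ω) := by
    intro ω; ring
  simp_rw [hkey]
  have hint2 : Integrable (fun ω => W s ω * (W t ω - W s ω)) P := by
    have := (IsBM.integrable_mul hW hs ht).sub (IsBM.integrable_W_sq hW hs)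
    refine this.congr ?_
    filter_upwards with ω
    simp only [Pi.sub_apply]; ring
  rw [integral_add (IsBM.integrable_W_sq hW hs) hint2, IsBM.integral_W_sq hW hs]
  have hmul := (IsBM.indep_incr2 hW hs hst).integral_mul_eq_mul_integral
    (IsBM.integrable_W hW hs).aestronglyMeasurable ((IsBM.integrable_W hW ht).sub (IsBM.integrable_W hW hs)).aestronglyMeasurable
  rw [show (fun ω => W s ω * (W t ω - W s ω)) = (W s) * (fun ω => W t ω - W s ω) from rfl, hmul]
  have : ∫ ω, (W t ω - W s ω) ∂P = 0 := by
    have h := hW.gaussian_incr s t hs hst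
    have h2 := MeasureTheory.integral_map (φ := fun ω => W t ω - W s ω) (μ := P)
      ((hW.measurable t).sub (hW.measurable s)).aemeasurable (f := id) aestronglyMeasurable_id
    simp only [id_eq] at h2
    rw [h, _root_.integral_id_gaussianReal] at h2
    exact h2.symm
  rw [show ((fun ω => W t ω - W s ω)) = (fun ω => W t ω - W s ω) from rfl, this]
  simp

end BM

lemma integral_abs_mul_le {Ω : Type*} [MeasurableSpace Ω] {P : Measure Ω} {f g : Ω → ℝ}
    (hf2 : Integrable (fun ω => f ω ^ 2) P) (hg2 : Integrable (fun ω => g ω ^ 2) P)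
    (hfg : Integrable (fun ω => f ω * g ω) P) :
    ∫ ω, |f ω * g ω| ∂P ≤ ((∫ ω, f ω ^ 2 ∂P) + ∫ ω, g ω ^ 2 ∂P) / 2 := by
  have h := integral_mono hfg.abs (((hf2.add hg2)).div_const 2) (fun ω => by
    simp only [Pi.add_apply]
    rw [abs_mul]
    nlinarith [sq_nonneg (|f ω| - |g ω|), sq_abs (f ω), sq_abs (g ω)])
  simp only [Pi.add_apply] at h
  rw [integral_div, integral_add hf2 hg2] at h
  exact h

lemma poly1 (t Δ : ℝ) : ∫ s in (0:ℝ)..t, (3 * s - Δ) * s = t ^ 3 - Δ * t ^ 2 / 2 := by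
  have e : (∫ s in (0:ℝ)..t, (3 * s - Δ) * s) = ∫ s in (0:ℝ)..t, (3 * s ^ 2 - Δ * s) :=
    intervalIntegral.integral_congr fun x _ => by ring
  rw [e, intervalIntegral.integral_sub
      (((continuous_const.fun_mul (continuous_pow 2))).intervalIntegrable _ _)
      ((continuous_const.fun_mul continuous_id').intervalIntegrable _ _),
    intervalIntegral.integral_const_mul, intervalIntegral.integral_const_mul,
    integral_pow, integral_id]
  norm_num
  ring

lemma poly2 (t Δ : ℝ) : ∫ s in t..Δ, (3 * s - Δ) * t
    = 3 * t * (Δ ^ 2 - t ^ 2) / 2 - Δ * t * (Δ - t) := by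
  have e : (∫ s in t..Δ, (3 * s - Δ) * t) = ∫ s in t..Δ, ((3 * t) * s - Δ * t) :=
    intervalIntegral.integral_congr fun x _ => by ring
  rw [e, intervalIntegral.integral_sub
      ((continuous_const.fun_mul continuous_id').intervalIntegrable _ _)
      (continuous_const.intervalIntegrable _ _),
    intervalIntegral.integral_const_mul, integral_id,
    intervalIntegral.integral_const]
  ring_nf

lemma min_split {t Δ : ℝ} (ht0 : 0 ≤ t) (htΔ : t ≤ Δ) :
    ∫ s in (0:ℝ)..Δ, (3 * s - Δ) * min t s
      = -(t ^ 3) / 2 + Δ * t ^ 2 / 2 + Δ ^ 2 * t / 2 := by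
  have hcm : Continuous fun s : ℝ => (3 * s - Δ) * min t s := by
    exact ((continuous_const.mul continuous_id').sub continuous_const).mul
      (continuous_const.min continuous_id')
  have hsplit := intervalIntegral.integral_add_adjacent_intervals (μ := volume) (a := (0:ℝ)) (b := t) (c := Δ)
    (f := fun s => (3 * s - Δ) * min t s) (hcm.intervalIntegrable _ _) (hcm.intervalIntegrable _ _)
  rw [← hsplit]
  have e1 : (∫ s in (0:ℝ)..t, (3 * s - Δ) * min t s) = ∫ s in (0:ℝ)..t, (3 * s - Δ) * s := by
    refine intervalIntegral.integral_congr fun x hx => ?_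
    rw [Set.uIcc_of_le ht0] at hx
    rw [min_eq_right hx.2]
  have e2 : (∫ s in t..Δ, (3 * s - Δ) * min t s) = ∫ s in t..Δ, (3 * s - Δ) * t := by
    refine intervalIntegral.integral_congr fun x hx => ?_
    rw [Set.uIcc_of_le htΔ] at hx
    rw [min_eq_left hx.1]
  rw [e1, e2, poly1, poly2]
  ring

lemma poly3 (Δ : ℝ) : ∫ t in (0:ℝ)..Δ, (3 * t - Δ) * (-(t ^ 3) / 2 + Δ * t ^ 2 / 2 + Δ ^ 2 * t / 2)
    = 17 * Δ ^ 5 / 60 := by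
  have e : (∫ t in (0:ℝ)..Δ, (3 * t - Δ) * (-(t ^ 3) / 2 + Δ * t ^ 2 / 2 + Δ ^ 2 * t / 2))
      = ∫ t in (0:ℝ)..Δ, (((-3/2 : ℝ) * t ^ 4 + (2 * Δ) * t ^ 3) + ((Δ ^ 2) * t ^ 2 + (-(Δ ^ 3) / 2) * t)) :=
    intervalIntegral.integral_congr fun x _ => by ring
  have i4 : IntervalIntegrable (fun t : ℝ => (-3/2 : ℝ) * t ^ 4) volume 0 Δ :=
    (continuous_const.mul (continuous_pow 4)).intervalIntegrable _ _
  have i3 : IntervalIntegrable (fun t : ℝ => (2 * Δ) * t ^ 3) volume 0 Δ :=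
    (continuous_const.mul (continuous_pow 3)).intervalIntegrable _ _
  have i2 : IntervalIntegrable (fun t : ℝ => (Δ ^ 2) * t ^ 2) volume 0 Δ :=
    (continuous_const.mul (continuous_pow 2)).intervalIntegrable _ _
  have i1 : IntervalIntegrable (fun t : ℝ => (-(Δ ^ 3) / 2) * t) volume 0 Δ :=
    (continuous_const.mul continuous_id').intervalIntegrable _ _
  rw [e, intervalIntegral.integral_add (i4.add i3) (i2.add i1),
    intervalIntegral.integral_add i4 i3, intervalIntegral.integral_add i2 i1,
    intervalIntegral.integral_const_mul, intervalIntegral.integral_const_mul,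
    intervalIntegral.integral_const_mul, intervalIntegral.integral_const_mul,
    integral_pow, integral_pow, integral_pow, integral_id]
  norm_num
  ring

lemma poly4 (Δ : ℝ) : ∫ t in (0:ℝ)..Δ, (3 * t - Δ) * t = Δ ^ 3 / 2 := by
  rw [poly1]; ring

set_option maxHeartbeats 1000000 in
/-- `E[ ΔV² ] = Δt⁵/2430` where `ΔV = (1/9)·(I_{(0,1,0)} − I_{(1,0,0)} − Δt·ΔU)`. -/
theorem expectation_deltaV_sq {Ω : Type*} [MeasurableSpace Ω] (P : Measure Ω)
    [IsProbabilityMeasure P] (W : ℝ → Ω → ℝ) (hW : IsBrownianMotion P W)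
    (Δt : ℝ) (hΔt : 0 < Δt) :
    ∫ ω, ((1 / 9 : ℝ) * ((∫ t in (0:ℝ)..Δt, (t * W t ω - ∫ s in (0:ℝ)..t, W s ω)) - (∫ t in (0:ℝ)..Δt, ∫ s in (0:ℝ)..t, W s ω) - Δt * (Δt / 2 * W Δt ω - ∫ t in (0:ℝ)..Δt, W t ω))) ^ 2 ∂P = Δt ^ 5 / 2430 := by
  obtain ⟨X, hXm, hXc, hXeq⟩ := exists_modification hW.measurable hW.cont
  have hXt : ∀ t, Measurable (X t) := fun t => hXm.comp measurable_prodMk_left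
  have hXae : ∀ t : ℝ, X t =ᵐ[P] W t := fun t => by
    filter_upwards [hXeq] with ω h using h t
  have hXmul_int : ∀ s t : ℝ, 0 ≤ s → 0 ≤ t → Integrable (fun ω => X s ω * X t ω) P := by
    intro s t hs ht
    refine (IsBM.integrable_mul hW hs ht).congr ?_
    filter_upwards [hXae s, hXae t] with ω h1 h2
    rw [h1, h2]
  have hXcovmin : ∀ s t : ℝ, 0 ≤ s → 0 ≤ t → ∫ ω, X s ω * X t ω ∂P = min s t := by
    have base : ∀ u v : ℝ, 0 ≤ u → u ≤ v → ∫ ω, X u ω * X v ω ∂P = u := by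
      intro u v hu huv
      rw [integral_congr_ae (g := fun ω => W u ω * W v ω) ?_]
      · exact IsBM.cov hW hu huv
      · filter_upwards [hXae u, hXae v] with ω h1 h2
        rw [h1, h2]
    intro s t hs ht
    rcases le_total s t with h | h
    · rw [base s t hs h, min_eq_left h]
    · have hcomm : ∫ ω, X s ω * X t ω ∂P = ∫ ω, X t ω * X s ω ∂P := by
        congr 1; funext ω; ring
      rw [hcomm, base t s ht h, min_eq_right h]
  have hXsq : ∀ t : ℝ, 0 ≤ t → ∫ ω, X t ω ^ 2 ∂P = t := by
    intro t ht
    have h1 := hXcovmin t t ht ht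
    rw [min_self] at h1
    have h2 : ∫ ω, X t ω ^ 2 ∂P = ∫ ω, X t ω * X t ω ∂P := by
      congr 1; funext ω; ring
    rw [h2, h1]
  have hXsq_int : ∀ t : ℝ, 0 ≤ t → Integrable (fun ω => X t ω ^ 2) P := by
    intro t ht
    have := hXmul_int t t ht ht
    refine this.congr ?_
    filter_upwards with ω; ring
  set Y : Ω → ℝ := fun ω => ∫ t in (0:ℝ)..Δt, (3 * t - Δt) * X t ω with hYdef
  -- Step A+B: rewrite the integrand
  have hstep : ∫ ω, ((1 / 9 : ℝ) * ((∫ t in (0:ℝ)..Δt, (t * W t ω - ∫ s in (0:ℝ)..t, W s ω)) - (∫ t in (0:ℝ)..Δt, ∫ s in (0:ℝ)..t, W s ω) - Δt * (Δt / 2 * W Δt ω - ∫ t in (0:ℝ)..Δt, W t ω))) ^ 2 ∂P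
      = ∫ ω, ((1/81 : ℝ) * Y ω ^ 2 - Δt ^ 2 / 81 * (Y ω * X Δt ω) + Δt ^ 4 / 324 * X Δt ω ^ 2) ∂P := by
    refine integral_congr_ae ?_
    filter_upwards [hXeq] with ω hω
    simp only [← hω]
    rw [path_reduction (fun t => X t ω) (hXc ω) Δt]
    have hYω : (∫ t in (0:ℝ)..Δt, (3 * t - Δt) * X t ω) = Y ω := rfl
    rw [hYω]
    ring
  rw [hstep]
  -- measure on [0, Δt]
  set μ : Measure ℝ := volume.restrict (Set.Ioc 0 Δt) with hμ
  haveI hμfin : IsFiniteMeasure μ := by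
    constructor
    rw [hμ, Measure.restrict_apply_univ, Real.volume_Ioc]
    exact ENNReal.ofReal_lt_top
  have hμint : ∀ g : ℝ → ℝ, (∫ t, g t ∂μ) = ∫ t in (0:ℝ)..Δt, g t := by
    intro g
    rw [hμ]
    exact (intervalIntegral.integral_of_le hΔt.le).symm
  have hae : ∀ᵐ t ∂μ, t ∈ Set.Ioc (0:ℝ) Δt := by
    rw [hμ]; exact ae_restrict_mem measurableSet_Ioc
  have haeν : ∀ᵐ p ∂(μ.prod μ), p ∈ Set.Ioc (0:ℝ) Δt ×ˢ Set.Ioc (0:ℝ) Δt := by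
    rw [hμ, Measure.prod_restrict]
    exact ae_restrict_mem (measurableSet_Ioc.prod measurableSet_Ioc)
  -- bound on |3t-Δ|
  have habs : ∀ t : ℝ, t ∈ Set.Ioc (0:ℝ) Δt → |3 * t - Δt| ≤ 4 * Δt := by
    intro t ht
    rw [abs_le]
    constructor <;> [linarith [ht.1]; linarith [ht.2]]
  -- bound ∫ |X s X t| ≤ Δt
  have hXabs : ∀ s t : ℝ, s ∈ Set.Ioc (0:ℝ) Δt → t ∈ Set.Ioc (0:ℝ) Δt →
      ∫ ω, |X s ω * X t ω| ∂P ≤ Δt := by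
    intro s t hs ht
    have h := integral_abs_mul_le (hXsq_int s hs.1.le) (hXsq_int t ht.1.le)
      (hXmul_int s t hs.1.le ht.1.le)
    rw [hXsq s hs.1.le, hXsq t ht.1.le] at h
    linarith [hs.2, ht.2]
  -- F1 for E[Y · XΔ]
  set F1 : ℝ → Ω → ℝ := fun t ω => (3 * t - Δt) * (X t ω * X Δt ω) with hF1def
  have hm1 : Measurable (Function.uncurry F1) := by
    apply Measurable.mul
    · exact ((measurable_fst.const_mul 3).sub measurable_const)
    · exact hXm.mul ((hXt Δt).comp measurable_snd)
  have hF1int : Integrable (Function.uncurry F1) (μ.prod P) := by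
    rw [integrable_prod_iff hm1.aestronglyMeasurable]
    constructor
    · filter_upwards [hae] with t ht
      have := (hXmul_int t Δt ht.1.le hΔt.le).const_mul (3 * t - Δt)
      simpa only [Function.uncurry_apply_pair, hF1def] using this
    · refine Integrable.mono' (integrable_const (4 * Δt * Δt))
        (hm1.aestronglyMeasurable.norm.integral_prod_right') ?_
      filter_upwards [hae] with t ht
      have hval : ∫ ω, ‖Function.uncurry F1 (t, ω)‖ ∂P
          = |3 * t - Δt| * ∫ ω, |X t ω * X Δt ω| ∂P := by
        rw [← MeasureTheory.integral_const_mul]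
        congr 1; funext ω
        rw [Function.uncurry, Real.norm_eq_abs, hF1def]
        simp only [abs_mul]
      rw [Real.norm_eq_abs, abs_of_nonneg (integral_nonneg fun ω => norm_nonneg _), hval]
      have h1 := habs t ht
      have h2 := hXabs t Δt ht ⟨hΔt, le_rfl⟩
      have h3 : (0:ℝ) ≤ |3 * t - Δt| := abs_nonneg _
      nlinarith [integral_nonneg (f := fun ω => |X t ω * X Δt ω|) (fun ω => abs_nonneg (X t ω * X Δt ω)) (μ := P)]
  have hYXeq : ∀ ω, Y ω * X Δt ω = ∫ t, F1 t ω ∂μ := by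
    intro ω
    rw [hYdef]
    simp only
    rw [← hμint, ← MeasureTheory.integral_mul_const]
    congr 1; funext t
    rw [hF1def]; ring
  have hI2 : Integrable (fun ω => Y ω * X Δt ω) P := by
    refine (hF1int.integral_prod_right).congr ?_
    filter_upwards with ω
    exact (hYXeq ω).symm
  have hV2 : ∫ ω, Y ω * X Δt ω ∂P = Δt ^ 3 / 2 := by
    calc ∫ ω, Y ω * X Δt ω ∂P = ∫ ω, ∫ t, F1 t ω ∂μ ∂P := by
          congr 1; funext ω; exact hYXeq ω
      _ = ∫ t, ∫ ω, F1 t ω ∂P ∂μ := (integral_integral_swap hF1int).symm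
      _ = ∫ t, (3 * t - Δt) * t ∂μ := by
          refine integral_congr_ae ?_
          filter_upwards [hae] with t ht
          rw [hF1def]
          simp only
          rw [MeasureTheory.integral_const_mul, hXcovmin t Δt ht.1.le hΔt.le,
            min_eq_left ht.2]
      _ = Δt ^ 3 / 2 := by rw [hμint]; exact poly4 Δt
  -- F2 for E[Y²]
  set F2 : ℝ × ℝ → Ω → ℝ := fun p ω => ((3 * p.1 - Δt) * (3 * p.2 - Δt)) * (X p.1 ω * X p.2 ω)
    with hF2def
  have hm2 : Measurable (Function.uncurry F2) := by
    apply Measurable.mul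
    · exact ((measurable_fst.fst.const_mul 3).sub measurable_const).mul
        ((measurable_fst.snd.const_mul 3).sub measurable_const)
    · exact (hXm.comp (measurable_fst.fst.prodMk measurable_snd)).mul
        (hXm.comp (measurable_fst.snd.prodMk measurable_snd))
  have hF2int : Integrable (Function.uncurry F2) ((μ.prod μ).prod P) := by
    rw [integrable_prod_iff hm2.aestronglyMeasurable]
    constructor
    · filter_upwards [haeν] with p hp
      have := (hXmul_int p.1 p.2 hp.1.1.le hp.2.1.le).const_mul
        ((3 * p.1 - Δt) * (3 * p.2 - Δt))
      simpa only [Function.uncurry_apply_pair, hF2def] using this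
    · refine Integrable.mono' (integrable_const (4 * Δt * (4 * Δt) * Δt))
        (hm2.aestronglyMeasurable.norm.integral_prod_right') ?_
      filter_upwards [haeν] with p hp
      have hval : ∫ ω, ‖Function.uncurry F2 (p, ω)‖ ∂P
          = |(3 * p.1 - Δt) * (3 * p.2 - Δt)| * ∫ ω, |X p.1 ω * X p.2 ω| ∂P := by
        rw [← MeasureTheory.integral_const_mul]
        congr 1; funext ω
        rw [Function.uncurry, Real.norm_eq_abs, hF2def]
        simp only [abs_mul]
      rw [Real.norm_eq_abs, abs_of_nonneg (integral_nonneg fun ω => norm_nonneg _), hval]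
      have h1 := habs p.1 hp.1
      have h2 := habs p.2 hp.2
      have h3 := hXabs p.1 p.2 hp.1 hp.2
      have h4 : |(3 * p.1 - Δt) * (3 * p.2 - Δt)| ≤ 4 * Δt * (4 * Δt) := by
        rw [abs_mul]
        exact mul_le_mul h1 h2 (abs_nonneg _) (by positivity)
      have h5 : (0:ℝ) ≤ |(3 * p.1 - Δt) * (3 * p.2 - Δt)| := abs_nonneg _
      nlinarith [integral_nonneg (f := fun ω => |X p.1 ω * X p.2 ω|) (fun ω => abs_nonneg (X p.1 ω * X p.2 ω)) (μ := P)]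
  have hYsq : ∀ ω, Y ω ^ 2 = ∫ p, F2 p ω ∂(μ.prod μ) := by
    intro ω
    rw [hYdef]
    simp only
    rw [← hμint (fun t => (3 * t - Δt) * X t ω), sq,
      ← integral_prod_mul (f := fun t => (3 * t - Δt) * X t ω)
        (g := fun t => (3 * t - Δt) * X t ω)]
    refine integral_congr_ae (Filter.Eventually.of_forall fun p => ?_)
    rw [hF2def]; ring
  have hI1 : Integrable (fun ω => Y ω ^ 2) P := by
    refine (hF2int.integral_prod_right).congr ?_
    filter_upwards with ω
    exact (hYsq ω).symm
  have hGc : Continuous fun p : ℝ × ℝ => ((3 * p.1 - Δt) * (3 * p.2 - Δt)) * min p.1 p.2 :=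
    (((continuous_const.mul continuous_fst).sub continuous_const).mul
      ((continuous_const.mul continuous_snd).sub continuous_const)).mul
      (continuous_fst.min continuous_snd)
  have hGint : Integrable (fun p : ℝ × ℝ => ((3 * p.1 - Δt) * (3 * p.2 - Δt)) * min p.1 p.2)
      (μ.prod μ) := by
    refine Integrable.mono' (integrable_const (4 * Δt * (4 * Δt) * Δt))
      hGc.aestronglyMeasurable ?_
    filter_upwards [haeν] with p hp
    have h1 := habs p.1 hp.1
    have h2 := habs p.2 hp.2
    have h3 : |min p.1 p.2| ≤ Δt := by
      rw [abs_of_nonneg (le_min hp.1.1.le hp.2.1.le)]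
      exact (min_le_left _ _).trans hp.1.2
    rw [Real.norm_eq_abs, abs_mul, abs_mul]
    have := mul_le_mul h1 h2 (abs_nonneg _) (by positivity)
    exact mul_le_mul this h3 (abs_nonneg _) (by positivity)
  have hV1 : ∫ ω, Y ω ^ 2 ∂P = 17 * Δt ^ 5 / 60 := by
    calc ∫ ω, Y ω ^ 2 ∂P = ∫ ω, ∫ p, F2 p ω ∂(μ.prod μ) ∂P := by
          congr 1; funext ω; exact hYsq ω
      _ = ∫ p, ∫ ω, F2 p ω ∂P ∂(μ.prod μ) := (integral_integral_swap hF2int).symm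
      _ = ∫ p : ℝ × ℝ, ((3 * p.1 - Δt) * (3 * p.2 - Δt)) * min p.1 p.2 ∂(μ.prod μ) := by
          refine integral_congr_ae ?_
          filter_upwards [haeν] with p hp
          rw [hF2def]
          simp only
          rw [MeasureTheory.integral_const_mul, hXcovmin p.1 p.2 hp.1.1.le hp.2.1.le]
      _ = ∫ t, ∫ s, ((3 * t - Δt) * (3 * s - Δt)) * min t s ∂μ ∂μ :=
          integral_prod _ hGint
      _ = ∫ t, (3 * t - Δt) * (-(t ^ 3) / 2 + Δt * t ^ 2 / 2 + Δt ^ 2 * t / 2) ∂μ := by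
          refine integral_congr_ae ?_
          filter_upwards [hae] with t ht
          have e : (∫ s, ((3 * t - Δt) * (3 * s - Δt)) * min t s ∂μ)
              = (3 * t - Δt) * ∫ s, (3 * s - Δt) * min t s ∂μ := by
            rw [← MeasureTheory.integral_const_mul]
            congr 1; funext s; ring
          rw [e, hμint (fun s => (3 * s - Δt) * min t s), min_split ht.1.le ht.2]
      _ = 17 * Δt ^ 5 / 60 := by rw [hμint]; exact poly3 Δt
  have hI3 : Integrable (fun ω => X Δt ω ^ 2) P := hXsq_int Δt hΔt.le
  have hV3 : ∫ ω, X Δt ω ^ 2 ∂P = Δt := hXsq Δt hΔt.le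
  have hfsub : Integrable (fun ω => (1/81 : ℝ) * Y ω ^ 2 - Δt ^ 2 / 81 * (Y ω * X Δt ω)) P :=
    (hI1.const_mul (1/81)).sub (hI2.const_mul (Δt ^ 2 / 81))
  rw [integral_add hfsub (hI3.const_mul _),
    integral_sub (hI1.const_mul (1/81 : ℝ)) (hI2.const_mul (Δt ^ 2 / 81)),
    MeasureTheory.integral_const_mul, MeasureTheory.integral_const_mul,
    MeasureTheory.integral_const_mul, hV1, hV2, hV3]
  ring
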